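/- Let P, Q be probability distributions on ℝ with everywhere positive continuous densities f_X, f_Y and CDFs F_X, F_Y. Suppose the condition (f_X(F_Y⁻¹(z)) − f_Y(F_Y⁻¹(z))) · (f_X(F_Y⁻¹(1−z)) − f_Y(F_Y⁻¹(1−z))) ≥ 0 holds for all z ∈ [0, 1/2]. Then equality holds in the halfspace-depth TVD bound: TVD(Q_P^{HD}, U) = TVD(P, Q), where Q_P^{HD} is the law of min{F_Y(X), 1 − F_Y(X)} for X ∼ P and U is the uniform distribution on [0, 1/2]. -/

import Mathlib

open MeasureTheory Set
open scoped ENNReal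

/-- The total variation distance between two measures on `ℝ`, computed via their
densities (Radon–Nikodym derivatives) with respect to Lebesgue measure:
`TVD(P,Q) = (1/2) ∫ |p(x) - q(x)| dx`. -/
noncomputable def TVD (μ ν : Measure ℝ) : ℝ :=
  (1 / 2) * ∫ x, |(μ.rnDeriv volume x).toReal - (ν.rnDeriv volume x).toReal|

private theorem lintegral_image_eq_lintegral_abs_deriv_mul'' {s : Set ℝ} {f f' : ℝ → ℝ}
    (hs : MeasurableSet s) (hf' : ∀ x ∈ s, HasDerivWithinAt f (f' x) s x) (hf : InjOn f s)
    (g : ℝ → ℝ≥0∞) : ∫⁻ x in f '' s, g x = ∫⁻ x in s, ENNReal.ofReal |f' x| * g (f x) := by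
  simpa only [ContinuousLinearMap.det_toSpanSingleton] using
    lintegral_image_eq_lintegral_abs_det_fderiv_mul volume hs
      (fun x hx => (hf' x hx).hasFDerivWithinAt) hf g

private theorem abs_add_of_mul_nonneg' {x y : ℝ} (h : 0 ≤ x * y) : |x + y| = |x| + |y| := by
  rcases mul_nonneg_iff.mp h with ⟨hx, hy⟩ | ⟨hx, hy⟩
  · rw [abs_of_nonneg hx, abs_of_nonneg hy, abs_of_nonneg (add_nonneg hx hy)]
  · rw [abs_of_nonpos hx, abs_of_nonpos hy, abs_of_nonpos (add_nonpos hx hy)]; ring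

/-- Let `P, Q` have everywhere positive continuous densities `fX, fY` and CDFs `FX, FY`,
with `FYinv` the inverse of the strictly increasing continuous CDF `FY`. If
`(fX (FYinv z) - fY (FYinv z)) * (fX (FYinv (1-z)) - fY (FYinv (1-z))) ≥ 0` for all
`z ∈ [0, 1/2]`, then equality holds in the halfspace-depth TVD bound:
`TVD(Q_P^{HD}, U) = TVD(P, Q)`, where `Q_P^{HD}` is the law of `min (FY X) (1 - FY X)`
for `X ~ P` and `U` is the uniform distribution on `[0, 1/2]`. -/
theorem hd_induced_tvd_eq_of_condition
    (P Q : Measure ℝ) [IsProbabilityMeasure P] [IsProbabilityMeasure Q]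
    (fX fY : ℝ → ℝ) (hfXpos : ∀ x, 0 < fX x) (hfYpos : ∀ x, 0 < fY x)
    (hfXc : Continuous fX) (hfYc : Continuous fY)
    (hP : P = volume.withDensity (fun x => ENNReal.ofReal (fX x)))
    (hQ : Q = volume.withDensity (fun x => ENNReal.ofReal (fY x)))
    (FX FY : ℝ → ℝ)
    (hFX : ∀ x, FX x = (P (Iic x)).toReal)
    (hFY : ∀ x, FY x = (Q (Iic x)).toReal)
    (FYinv : ℝ → ℝ)
    (hinv : ∀ z ∈ Ioo (0 : ℝ) 1, FY (FYinv z) = z)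
    (hcond : ∀ z ∈ Icc (0 : ℝ) (1 / 2),
      0 ≤ (fX (FYinv z) - fY (FYinv z)) * (fX (FYinv (1 - z)) - fY (FYinv (1 - z)))) :
    TVD (Measure.map (fun x => min (FY x) (1 - FY x)) P)
        ((2 : ℝ≥0∞) • volume.restrict (Icc (0 : ℝ) (1 / 2))) = TVD P Q := by
  classical
  have hfXm : Measurable fX := hfXc.measurable
  have hfYm : Measurable fY := hfYc.measurable
  -- integrability of the densities
  have hPuniv : ∫⁻ x, ENNReal.ofReal (fX x) = 1 := by
    have h := measure_univ (μ := P)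
    rw [hP] at h
    simpa [withDensity_apply _ MeasurableSet.univ] using h
  have hQuniv : ∫⁻ x, ENNReal.ofReal (fY x) = 1 := by
    have h := measure_univ (μ := Q)
    rw [hQ] at h
    simpa [withDensity_apply _ MeasurableSet.univ] using h
  have hfXint : Integrable fX := by
    refine ⟨hfXc.aestronglyMeasurable, ?_⟩
    rw [hasFiniteIntegral_iff_ofReal (Filter.Eventually.of_forall fun x => (hfXpos x).le), hPuniv]
    exact ENNReal.one_lt_top
  have hfYint : Integrable fY := by
    refine ⟨hfYc.aestronglyMeasurable, ?_⟩
    rw [hasFiniteIntegral_iff_ofReal (Filter.Eventually.of_forall fun x => (hfYpos x).le), hQuniv]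
    exact ENNReal.one_lt_top
  -- no atoms
  haveI hPnoatom : NullSingletonClass P := by
    refine ⟨fun a => ?_⟩
    rw [hP, withDensity_apply _ (measurableSet_singleton a),
      Measure.restrict_eq_zero.mpr (measure_singleton a), lintegral_zero_measure]
  -- CDF values in ℝ≥0∞
  have hFXval : ∀ a, P (Iic a) = ENNReal.ofReal (FX a) := fun a => by
    rw [hFX a, ENNReal.ofReal_toReal (measure_ne_top P _)]
  have hFX0 : ∀ a, 0 ≤ FX a := fun a => by rw [hFX]; exact ENNReal.toReal_nonneg
  have hFX1 : ∀ a, FX a ≤ 1 := fun a => by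
    rw [hFX]
    have := ENNReal.toReal_mono (ENNReal.one_ne_top) (prob_le_one (μ := P) (s := Iic a))
    simpa using this
  have hPIio : ∀ a, P (Iio a) = ENNReal.ofReal (FX a) := fun a => by
    rw [measure_congr (Iio_ae_eq_Iic (a := a)), hFXval]
  have hPIoi : ∀ a, P (Ioi a) = ENNReal.ofReal (1 - FX a) := fun a => by
    have h1 : P (Ioi a) = 1 - P (Iic a) := by
      rw [← Set.compl_Iic, measure_compl measurableSet_Iic (measure_ne_top _ _), measure_univ]
    rw [h1, hFXval, ← ENNReal.ofReal_one, ← ENNReal.ofReal_sub _ (hFX0 a)]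
  -- FY as an integral, derivative of FY
  have hFYint_eq : ∀ x, FY x = ∫ t in Iic x, fY t := by
    intro x
    rw [hFY, hQ, withDensity_apply _ measurableSet_Iic,
      integral_eq_lintegral_of_nonneg_ae (Filter.Eventually.of_forall fun t => (hfYpos t).le)
        hfYc.aestronglyMeasurable.restrict]
  have hFYderiv : ∀ x, HasDerivAt FY (fY x) x := by
    intro x
    have hrepr : ∀ y, FY y = FY 0 + ∫ t in (0:ℝ)..y, fY t := by
      intro y
      rw [hFYint_eq y, hFYint_eq 0,
        ← intervalIntegral.integral_Iic_sub_Iic hfYint.integrableOn hfYint.integrableOn]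
      ring
    have h : HasDerivAt (fun y => FY 0 + ∫ t in (0:ℝ)..y, fY t) (fY x) x :=
      (intervalIntegral.integral_hasDerivAt_right hfYint.intervalIntegrable
        (hfYc.stronglyMeasurableAtFilter volume (nhds x)) hfYc.continuousAt).const_add (FY 0)
    have hFYfun : FY = fun y => FY 0 + ∫ t in (0:ℝ)..y, fY t := funext hrepr
    rw [hFYfun]
    exact h
  have hFYcont : Continuous FY := by
    rw [continuous_iff_continuousAt]; exact fun x => (hFYderiv x).continuousAt
  have hFYmono : StrictMono FY := by
    apply strictMono_of_deriv_pos
    intro x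
    rw [(hFYderiv x).deriv]
    exact hfYpos x
  have hFY01 : ∀ x, FY x ∈ Ioo (0:ℝ) 1 := by
    intro x
    have h1 : ∀ a, 0 ≤ FY a := fun a => by rw [hFY]; exact ENNReal.toReal_nonneg
    have h2 : ∀ a, FY a ≤ 1 := fun a => by
      rw [hFY]
      have := ENNReal.toReal_mono (ENNReal.one_ne_top) (prob_le_one (μ := Q) (s := Iic a))
      simpa using this
    exact ⟨lt_of_le_of_lt (h1 (x - 1)) (hFYmono (by linarith)),
      lt_of_lt_of_le (hFYmono (lt_add_one x)) (h2 (x + 1))⟩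
  -- inverse comparison lemmas
  have hlt1 : ∀ {z x : ℝ}, z ∈ Ioo (0:ℝ) 1 → (FYinv z < x ↔ z < FY x) := by
    intro z x hz
    conv_rhs => rw [← hinv z hz]
    exact hFYmono.lt_iff_lt.symm
  have hlt2 : ∀ {z x : ℝ}, z ∈ Ioo (0:ℝ) 1 → (x < FYinv z ↔ FY x < z) := by
    intro z x hz
    conv_rhs => rw [← hinv z hz]
    exact hFYmono.lt_iff_lt.symm
  have hle1 : ∀ {z x : ℝ}, z ∈ Ioo (0:ℝ) 1 → (x ≤ FYinv z ↔ FY x ≤ z) := by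
    intro z x hz
    conv_rhs => rw [← hinv z hz]
    exact hFYmono.le_iff_le.symm
  have hle2 : ∀ {z x : ℝ}, z ∈ Ioo (0:ℝ) 1 → (FYinv z ≤ x ↔ z ≤ FY x) := by
    intro z x hz
    conv_rhs => rw [← hinv z hz]
    exact hFYmono.le_iff_le.symm
  have hinvFY : ∀ x, FYinv (FY x) = x := fun x =>
    hFYmono.injective (hinv (FY x) (hFY01 x))
  -- continuity of FYinv on (0,1)
  have hinvcont : ∀ z ∈ Ioo (0:ℝ) 1, ContinuousAt FYinv z := by
    intro z hz
    rw [ContinuousAt]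
    apply tendsto_order.2
    constructor
    · intro b hb
      have hb' : FY b < z := (hlt2 hz).mp hb
      filter_upwards [Ioo_mem_nhds hb' hz.2] with w hw
      have hw01 : w ∈ Ioo (0:ℝ) 1 := ⟨lt_trans (hFY01 b).1 hw.1, hw.2⟩
      exact (hlt2 hw01).mpr hw.1
    · intro b hb
      have hb' : z < FY b := (hlt1 hz).mp hb
      filter_upwards [Ioo_mem_nhds hz.1 hb'] with w hw
      have hw01 : w ∈ Ioo (0:ℝ) 1 := ⟨hw.1, lt_trans hw.2 (hFY01 b).2⟩
      exact (hlt1 hw01).mpr hw.2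
  -- derivative of FYinv on (0,1)
  have hinvderiv : ∀ z ∈ Ioo (0:ℝ) 1, HasDerivAt FYinv (fY (FYinv z))⁻¹ z := by
    intro z hz
    refine HasDerivAt.of_local_left_inverse (hinvcont z hz) (hFYderiv (FYinv z))
      (ne_of_gt (hfYpos _)) ?_
    filter_upwards [Ioo_mem_nhds hz.1 hz.2] with w hw using hinv w hw
  -- measurable version of FYinv
  have hinvcontOn : ContinuousOn FYinv (Ioo (0:ℝ) 1) := fun z hz =>
    (hinvcont z hz).continuousWithinAt
  set k : ℝ → ℝ := fun z => if hz : z ∈ Ioo (0:ℝ) 1 then (Ioo (0:ℝ) 1).restrict FYinv ⟨z, hz⟩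
    else 0 with hkdef
  have hkmeas : Measurable k :=
    Measurable.dite (g := fun _ => (0:ℝ))
      (continuousOn_iff_continuous_restrict.mp hinvcontOn).measurable
      measurable_const measurableSet_Ioo
  have hkeq : ∀ z ∈ Ioo (0:ℝ) 1, k z = FYinv z := by
    intro z hz
    simp only [hkdef]
    rw [dif_pos hz]
    rfl
  -- the density of the mapped measure
  set u : ℝ → ℝ := fun t => (fY (k t))⁻¹ * fX (k t) with hudef
  set hr : ℝ → ℝ := fun t => u t + u (1 - t) with hhrdef
  have hunn : ∀ t, 0 ≤ u t := fun t =>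
    mul_nonneg (inv_pos.2 (hfYpos _)).le (hfXpos _).le
  have humeas : Measurable u := ((hfYm.comp hkmeas).inv).mul (hfXm.comp hkmeas)
  have hrmeas : Measurable hr := humeas.add (humeas.comp (measurable_const.sub measurable_id))
  set d : ℝ → ℝ≥0∞ :=
    fun t => (Ioo (0:ℝ) (1/2)).indicator (fun t => ENNReal.ofReal (hr t)) t with hddef
  have hdmeas : Measurable d :=
    (ENNReal.measurable_ofReal.comp hrmeas).indicator measurableSet_Ioo
  -- membership helpers
  have hmem1 : ∀ {b t : ℝ}, b ∈ Ioc (0:ℝ) (1/2) → t ∈ Ioo (0:ℝ) b → t ∈ Ioo (0:ℝ) 1 :=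
    fun hb ht => ⟨ht.1, lt_of_lt_of_le ht.2 (le_trans hb.2 (by norm_num))⟩
  have hmem2 : ∀ {b t : ℝ}, b ∈ Ioc (0:ℝ) (1/2) → t ∈ Ioo (0:ℝ) b → (1 - t) ∈ Ioo (0:ℝ) 1 := by
    intro b t hb ht
    constructor
    · have : t < 1/2 := lt_of_lt_of_le ht.2 hb.2
      linarith
    · linarith [ht.1]
  -- images
  have himage1 : ∀ b ∈ Ioo (0:ℝ) 1, FYinv '' Ioo 0 b = Iio (FYinv b) := by
    intro b hb
    ext y
    constructor
    · rintro ⟨t, ht, rfl⟩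
      have ht01 : t ∈ Ioo (0:ℝ) 1 := ⟨ht.1, lt_trans ht.2 hb.2⟩
      have : t < FY (FYinv b) := by rw [hinv b hb]; exact ht.2
      exact (hlt1 ht01).mpr this
    · intro hy
      refine ⟨FY y, ⟨(hFY01 y).1, ?_⟩, hinvFY y⟩
      exact (hlt2 hb).mp hy
  have himage2 : ∀ b ∈ Ioo (0:ℝ) 1, FYinv '' Ioo b 1 = Ioi (FYinv b) := by
    intro b hb
    ext y
    constructor
    · rintro ⟨t, ht, rfl⟩
      have ht01 : t ∈ Ioo (0:ℝ) 1 := ⟨lt_trans hb.1 ht.1, ht.2⟩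
      have : b < FY (FYinv t) := by rw [hinv t ht01]; exact ht.1
      exact (hlt1 hb).mpr this
    · intro hy
      refine ⟨FY y, ⟨(hlt1 hb).mp hy, (hFY01 y).2⟩, hinvFY y⟩
  -- injectivity
  have hinjIoo : ∀ s : Set ℝ, s ⊆ Ioo (0:ℝ) 1 → InjOn FYinv s := by
    intro s hs a ha b hb hab
    have := congrArg FY hab
    rwa [hinv a (hs ha), hinv b (hs hb)] at this
  -- derivative facts within Ioo 0 b
  have hder1 : ∀ b ∈ Ioc (0:ℝ) (1/2), ∀ t ∈ Ioo (0:ℝ) b,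
      HasDerivWithinAt FYinv ((fun s => (fY (FYinv s))⁻¹) t) (Ioo (0:ℝ) b) t :=
    fun b hb t ht => (hinvderiv t (hmem1 hb ht)).hasDerivWithinAt
  have hder2 : ∀ b ∈ Ioc (0:ℝ) (1/2), ∀ t ∈ Ioo (0:ℝ) b,
      HasDerivWithinAt (fun s => FYinv (1 - s)) ((fun s => -(fY (FYinv (1 - s)))⁻¹) t)
        (Ioo (0:ℝ) b) t := by
    intro b hb t ht
    have h1 : HasDerivAt (fun s : ℝ => 1 - s) (-1) t := by
      simpa using (hasDerivAt_id t).const_sub 1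
    have h2 := (hinvderiv (1 - t) (hmem2 hb ht)).comp t h1
    have : (fY (FYinv (1 - t)))⁻¹ * (-1) = -(fY (FYinv (1 - t)))⁻¹ := by ring
    rw [this] at h2
    exact h2.hasDerivWithinAt
  have hinj2 : ∀ b ∈ Ioc (0:ℝ) (1/2), InjOn (fun s => FYinv (1 - s)) (Ioo (0:ℝ) b) := by
    intro b hb a ha a' ha' h
    have hsub : Ioo (1 - b) 1 ⊆ Ioo (0:ℝ) 1 := fun x hx => ⟨by
        have : (0:ℝ) < 1 - b := by linarith [lt_of_le_of_lt hb.2 (by norm_num : (1:ℝ)/2 < 1)]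
        linarith [hx.1], hx.2⟩
    have hmem : ∀ {s : ℝ}, s ∈ Ioo (0:ℝ) b → (1 - s) ∈ Ioo (1 - b) 1 := by
      intro s hs; exact ⟨by linarith [hs.2], by linarith [hs.1]⟩
    have := hinjIoo (Ioo (1 - b) 1) hsub (hmem ha) (hmem ha') h
    linarith
  have himg2 : ∀ b ∈ Ioc (0:ℝ) (1/2),
      (fun s => FYinv (1 - s)) '' Ioo (0:ℝ) b = Ioi (FYinv (1 - b)) := by
    intro b hb
    have h1b : (1 - b) ∈ Ioo (0:ℝ) 1 := by
      constructor
      · linarith [lt_of_le_of_lt hb.2 (by norm_num : (1:ℝ)/2 < 1)]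
      · linarith [hb.1]
    have : (fun s : ℝ => FYinv (1 - s)) '' Ioo (0:ℝ) b = FYinv '' ((fun s : ℝ => 1 - s) '' Ioo (0:ℝ) b) := by
      rw [Set.image_image]
    rw [this, Set.image_const_sub_Ioo]
    simpa using himage2 (1 - b) h1b
  -- chief computation of the candidate density measure on Ioo 0 b
  have hchief : ∀ b ∈ Ioc (0:ℝ) (1/2),
      ∫⁻ t in Ioo (0:ℝ) b, d t
        = ENNReal.ofReal (FX (FYinv b)) + ENNReal.ofReal (1 - FX (FYinv (1 - b))) := by
    intro b hb
    have hb01 : b ∈ Ioo (0:ℝ) 1 := ⟨hb.1, lt_of_le_of_lt hb.2 (by norm_num)⟩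
    have hsub : Ioo (0:ℝ) b ⊆ Ioo (0:ℝ) (1/2) := Ioo_subset_Ioo_right hb.2
    have h1 : ∫⁻ t in Ioo (0:ℝ) b, d t
        = (∫⁻ t in Ioo (0:ℝ) b, ENNReal.ofReal (u t))
          + ∫⁻ t in Ioo (0:ℝ) b, ENNReal.ofReal (u (1 - t)) := by
      rw [← lintegral_add_left humeas.ennreal_ofReal]
      apply setLIntegral_congr_fun measurableSet_Ioo
      intro t ht
      have ht' : t ∈ Ioo (0:ℝ) (1/2) := hsub ht
      simp only [hddef, indicator_of_mem ht', hhrdef]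
      rw [ENNReal.ofReal_add (hunn t) (hunn (1 - t))]
    have h2 : ∫⁻ t in Ioo (0:ℝ) b, ENNReal.ofReal (u t) = ENNReal.ofReal (FX (FYinv b)) := by
      have key := lintegral_image_eq_lintegral_abs_deriv_mul'' measurableSet_Ioo
        (hder1 b hb) (hinjIoo _ (fun t ht => hmem1 hb ht))
        (fun y => ENNReal.ofReal (fX y))
      rw [himage1 b hb01] at key
      have hL : ∫⁻ y in Iio (FYinv b), ENNReal.ofReal (fX y) = P (Iio (FYinv b)) := by
        rw [hP, withDensity_apply _ measurableSet_Iio]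
      rw [hL, hPIio] at key
      rw [key]
      apply setLIntegral_congr_fun measurableSet_Ioo
      intro t ht
      have ht01 : t ∈ Ioo (0:ℝ) 1 := hmem1 hb ht
      simp only [hudef]
      rw [hkeq t ht01, abs_of_pos (inv_pos.2 (hfYpos _)),
        ENNReal.ofReal_mul (inv_pos.2 (hfYpos _)).le]
    have h3 : ∫⁻ t in Ioo (0:ℝ) b, ENNReal.ofReal (u (1 - t))
        = ENNReal.ofReal (1 - FX (FYinv (1 - b))) := by
      have key := lintegral_image_eq_lintegral_abs_deriv_mul'' measurableSet_Ioo
        (hder2 b hb) (hinj2 b hb) (fun y => ENNReal.ofReal (fX y))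
      rw [himg2 b hb] at key
      have hL : ∫⁻ y in Ioi (FYinv (1 - b)), ENNReal.ofReal (fX y) = P (Ioi (FYinv (1 - b))) := by
        rw [hP, withDensity_apply _ measurableSet_Ioi]
      rw [hL, hPIoi] at key
      rw [key]
      apply setLIntegral_congr_fun measurableSet_Ioo
      intro t ht
      have ht01 : (1 - t) ∈ Ioo (0:ℝ) 1 := hmem2 hb ht
      simp only [hudef]
      rw [hkeq _ ht01, abs_neg, abs_of_pos (inv_pos.2 (hfYpos _)),
        ENNReal.ofReal_mul (inv_pos.2 (hfYpos _)).le]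
    rw [h1, h2, h3]
  -- identifying the mapped measure
  have hTmeas : Measurable (fun x => min (FY x) (1 - FY x)) :=
    (hFYcont.min (continuous_const.sub hFYcont)).measurable
  haveI hprob : IsProbabilityMeasure (Measure.map (fun x => min (FY x) (1 - FY x)) P) :=
    Measure.isProbabilityMeasure_map hTmeas.aemeasurable
  have hmap : Measure.map (fun x => min (FY x) (1 - FY x)) P = volume.withDensity d := by
    apply Measure.ext_of_Iic
    intro z
    rw [Measure.map_apply hTmeas measurableSet_Iic, withDensity_apply _ measurableSet_Iic]
    have hres : ∫⁻ t in Iic z, d t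
        = ∫⁻ t in Ioo (0:ℝ) (1/2) ∩ Iic z, ENNReal.ofReal (hr t) := by
      simp only [hddef]
      rw [lintegral_indicator measurableSet_Ioo, Measure.restrict_restrict measurableSet_Ioo]
    rcases le_or_gt z 0 with hz | hz
    · have hpre : (fun x => min (FY x) (1 - FY x)) ⁻¹' Iic z = ∅ := by
        ext x
        simp only [mem_preimage, mem_Iic, mem_empty_iff_false, iff_false, not_le]
        exact lt_of_le_of_lt hz (lt_min (hFY01 x).1 (by linarith [(hFY01 x).2]))
      have hset : Ioo (0:ℝ) (1/2) ∩ Iic z = ∅ := by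
        ext t
        simp only [mem_inter_iff, mem_Ioo, mem_Iic, mem_empty_iff_false, iff_false]
        rintro ⟨⟨h1, _⟩, h2⟩
        linarith
      rw [hpre, measure_empty, hres, hset]
      simp
    rcases lt_or_ge z (1/2) with hz2 | hz2
    · have hz01 : z ∈ Ioo (0:ℝ) 1 := ⟨hz, by linarith⟩
      have h1z : (1 - z) ∈ Ioo (0:ℝ) 1 := ⟨by linarith, by linarith⟩
      have hcc : FYinv z < FYinv (1 - z) := by
        apply (hlt1 hz01).mpr
        rw [hinv _ h1z]
        linarith
      have hpre : (fun x => min (FY x) (1 - FY x)) ⁻¹' Iic z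
          = Iic (FYinv z) ∪ Ici (FYinv (1 - z)) := by
        ext x
        simp only [mem_preimage, mem_Iic, mem_union, mem_Ici, min_le_iff]
        constructor
        · rintro (h | h)
          · exact Or.inl ((hle1 hz01).mpr h)
          · exact Or.inr ((hle2 h1z).mpr (by linarith))
        · rintro (h | h)
          · exact Or.inl ((hle1 hz01).mp h)
          · exact Or.inr (by linarith [(hle2 h1z).mp h])
      rw [hpre, measure_union (Iic_disjoint_Ici.mpr (not_le.mpr hcc)) measurableSet_Ici]
      have hIci : P (Ici (FYinv (1 - z))) = ENNReal.ofReal (1 - FX (FYinv (1 - z))) := by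
        rw [← measure_congr (Ioi_ae_eq_Ici (a := FYinv (1 - z))), hPIoi]
      rw [hFXval, hIci, hres]
      have hset : Ioo (0:ℝ) (1/2) ∩ Iic z = Ioc (0:ℝ) z := by
        ext t
        simp only [mem_inter_iff, mem_Ioo, mem_Iic, mem_Ioc]
        constructor
        · rintro ⟨⟨h1, _⟩, h2⟩; exact ⟨h1, h2⟩
        · rintro ⟨h1, h2⟩; exact ⟨⟨h1, by linarith⟩, h2⟩
      rw [hset, ← Measure.restrict_congr_set (Ioo_ae_eq_Ioc (a := (0:ℝ)) (b := z))]
      have := hchief z ⟨hz, hz2.le⟩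
      rw [← this]
      apply setLIntegral_congr_fun measurableSet_Ioo
      intro t ht
      have ht' : t ∈ Ioo (0:ℝ) (1/2) := ⟨ht.1, lt_trans ht.2 hz2⟩
      simp only [hddef, indicator_of_mem ht']
    · have hpre : (fun x => min (FY x) (1 - FY x)) ⁻¹' Iic z = univ := by
        ext x
        simp only [mem_preimage, mem_Iic, mem_univ, iff_true]
        rcases le_total (FY x) (1/2) with h | h
        · exact le_trans (min_le_left _ _) (by linarith)
        · exact le_trans (min_le_right _ _) (by linarith)
      rw [hpre, measure_univ, hres]
      have hset : Ioo (0:ℝ) (1/2) ∩ Iic z = Ioo (0:ℝ) (1/2) := by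
        apply inter_eq_left.mpr
        intro t ht
        exact le_trans ht.2.le hz2
      rw [hset]
      have h12 : ((1:ℝ)/2) ∈ Ioc (0:ℝ) (1/2) := ⟨by norm_num, le_refl _⟩
      have hch := hchief (1/2) h12
      have heq : ∫⁻ t in Ioo (0:ℝ) (1/2), ENNReal.ofReal (hr t)
          = ∫⁻ t in Ioo (0:ℝ) (1/2), d t := by
        apply setLIntegral_congr_fun measurableSet_Ioo
        intro t ht
        simp only [hddef, indicator_of_mem ht]
      rw [heq, hch]
      have h2 : (1:ℝ) - 1/2 = 1/2 := by norm_num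
      rw [h2, ← ENNReal.ofReal_add (hFX0 _) (by linarith [hFX1 (FYinv (1/2))])]
      norm_num
  -- Radon–Nikodym derivatives
  have hrn1 : (Measure.map (fun x => min (FY x) (1 - FY x)) P).rnDeriv volume =ᵐ[volume] d := by
    rw [hmap]; exact Measure.rnDeriv_withDensity volume hdmeas
  have hν : (2 : ℝ≥0∞) • volume.restrict (Icc (0:ℝ) (1/2))
      = volume.withDensity ((Icc (0:ℝ) (1/2)).indicator (fun _ => 2)) := by
    rw [withDensity_indicator measurableSet_Icc, withDensity_const]
  have hrn2 : ((2 : ℝ≥0∞) • volume.restrict (Icc (0:ℝ) (1/2))).rnDeriv volume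
      =ᵐ[volume] (Icc (0:ℝ) (1/2)).indicator (fun _ => 2) := by
    rw [hν]
    exact Measure.rnDeriv_withDensity volume (measurable_const.indicator measurableSet_Icc)
  have hrnP : P.rnDeriv volume =ᵐ[volume] fun x => ENNReal.ofReal (fX x) := by
    rw [hP]; exact Measure.rnDeriv_withDensity volume hfXm.ennreal_ofReal
  have hrnQ : Q.rnDeriv volume =ᵐ[volume] fun x => ENNReal.ofReal (fY x) := by
    rw [hQ]; exact Measure.rnDeriv_withDensity volume hfYm.ennreal_ofReal
  have hrnn : ∀ t, 0 ≤ hr t := fun t => add_nonneg (hunn t) (hunn (1 - t))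
  have hRHS : TVD P Q = (1/2) * ∫ x, |fX x - fY x| := by
    unfold TVD
    congr 1
    apply integral_congr_ae
    filter_upwards [hrnP, hrnQ] with x h1 h2
    rw [h1, h2, ENNReal.toReal_ofReal (hfXpos x).le, ENNReal.toReal_ofReal (hfYpos x).le]
  have hLHS : TVD (Measure.map (fun x => min (FY x) (1 - FY x)) P)
      ((2 : ℝ≥0∞) • volume.restrict (Icc (0 : ℝ) (1 / 2)))
      = (1/2) * ∫ t in Ioo (0:ℝ) (1/2), |hr t - 2| := by
    unfold TVD
    congr 1
    rw [← integral_indicator measurableSet_Ioo]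
    apply integral_congr_ae
    have hz2 : ∀ᵐ x : ℝ, x ∉ ({0, 1/2} : Set ℝ) := by
      apply measure_eq_zero_iff_ae_notMem.mp
      exact Set.Finite.measure_zero (Set.toFinite _) volume
    filter_upwards [hrn1, hrn2, hz2] with x h1 h2 h3
    rw [h1, h2]
    by_cases hx : x ∈ Ioo (0:ℝ) (1/2)
    · rw [indicator_of_mem hx]
      simp only [hddef]
      rw [indicator_of_mem hx, indicator_of_mem (Ioo_subset_Icc_self hx),
        ENNReal.toReal_ofReal (hrnn x)]
      simp
    · have hx' : x ∉ Icc (0:ℝ) (1/2) := by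
        simp only [mem_insert_iff, mem_singleton_iff, not_or] at h3
        intro hmem
        exact hx ⟨lt_of_le_of_ne hmem.1 (Ne.symm h3.1), lt_of_le_of_ne hmem.2 h3.2⟩
      rw [indicator_of_notMem hx]
      simp only [hddef]
      rw [indicator_of_notMem hx, indicator_of_notMem hx']
      simp
  -- change of variables for the two halves
  have hgint : Integrable (fun y => |fX y - fY y|) := (hfXint.sub hfYint).abs
  have h12mem : ((1:ℝ)/2) ∈ Ioc (0:ℝ) (1/2) := ⟨by norm_num, le_refl _⟩
  have h12oo : ((1:ℝ)/2) ∈ Ioo (0:ℝ) 1 := by norm_num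
  have habs1 : ∀ t ∈ Ioo (0:ℝ) (1/2),
      |(fun s => (fY (FYinv s))⁻¹) t| • |fX (FYinv t) - fY (FYinv t)|
        = (fY (FYinv t))⁻¹ * |fX (FYinv t) - fY (FYinv t)| := by
    intro t ht
    rw [smul_eq_mul, abs_of_pos (inv_pos.2 (hfYpos _))]
  have habs2 : ∀ t ∈ Ioo (0:ℝ) (1/2),
      |(fun s => -(fY (FYinv (1 - s)))⁻¹) t| • |fX (FYinv (1 - t)) - fY (FYinv (1 - t))|
        = (fY (FYinv (1 - t)))⁻¹ * |fX (FYinv (1 - t)) - fY (FYinv (1 - t))| := by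
    intro t ht
    rw [smul_eq_mul]
    simp only
    rw [abs_neg, abs_of_pos (inv_pos.2 (hfYpos _))]
  have hv1eq : ∫ t in Ioo (0:ℝ) (1/2), (fY (FYinv t))⁻¹ * |fX (FYinv t) - fY (FYinv t)|
      = ∫ y in Iio (FYinv (1/2)), |fX y - fY y| := by
    have hcv := integral_image_eq_integral_abs_deriv_smul measurableSet_Ioo
      (hder1 _ h12mem) (hinjIoo _ (fun t ht => hmem1 h12mem ht)) (fun y => |fX y - fY y|)
    rw [himage1 _ h12oo] at hcv
    rw [hcv]
    exact setIntegral_congr_fun measurableSet_Ioo (fun t ht => (habs1 t ht).symm)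
  have hv2eq : ∫ t in Ioo (0:ℝ) (1/2), (fY (FYinv (1 - t)))⁻¹ * |fX (FYinv (1 - t)) - fY (FYinv (1 - t))|
      = ∫ y in Ioi (FYinv (1/2)), |fX y - fY y| := by
    have hcv := integral_image_eq_integral_abs_deriv_smul measurableSet_Ioo
      (hder2 _ h12mem) (hinj2 _ h12mem) (fun y => |fX y - fY y|)
    rw [himg2 _ h12mem] at hcv
    have heq : (1:ℝ) - 1/2 = 1/2 := by norm_num
    rw [heq] at hcv
    rw [hcv]
    exact setIntegral_congr_fun measurableSet_Ioo (fun t ht => (habs2 t ht).symm)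
  have hv1int : IntegrableOn (fun t => (fY (FYinv t))⁻¹ * |fX (FYinv t) - fY (FYinv t)|)
      (Ioo (0:ℝ) (1/2)) := by
    have hiff := integrableOn_image_iff_integrableOn_abs_deriv_smul measurableSet_Ioo
      (hder1 _ h12mem) (hinjIoo _ (fun t ht => hmem1 h12mem ht)) (fun y => |fX y - fY y|)
    rw [himage1 _ h12oo] at hiff
    have := hiff.mp hgint.integrableOn
    exact this.congr_fun (fun t ht => habs1 t ht) measurableSet_Ioo
  have hv2int : IntegrableOn
      (fun t => (fY (FYinv (1 - t)))⁻¹ * |fX (FYinv (1 - t)) - fY (FYinv (1 - t))|)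
      (Ioo (0:ℝ) (1/2)) := by
    have hiff := integrableOn_image_iff_integrableOn_abs_deriv_smul measurableSet_Ioo
      (hder2 _ h12mem) (hinj2 _ h12mem) (fun y => |fX y - fY y|)
    rw [himg2 _ h12mem] at hiff
    have := hiff.mp hgint.integrableOn
    exact this.congr_fun (fun t ht => habs2 t ht) measurableSet_Ioo
  -- pointwise splitting of |hr - 2|
  have hsplit : EqOn (fun t => |hr t - 2|)
      (fun t => (fY (FYinv t))⁻¹ * |fX (FYinv t) - fY (FYinv t)|
        + (fY (FYinv (1 - t)))⁻¹ * |fX (FYinv (1 - t)) - fY (FYinv (1 - t))|)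
      (Ioo (0:ℝ) (1/2)) := by
    intro t ht
    have ht01 : t ∈ Ioo (0:ℝ) 1 := hmem1 h12mem ht
    have ht01' : (1 - t) ∈ Ioo (0:ℝ) 1 := hmem2 h12mem ht
    have hya := hfYpos (FYinv t)
    have hyb := hfYpos (FYinv (1 - t))
    simp only [hhrdef, hudef]
    rw [hkeq t ht01, hkeq _ ht01']
    have key : (fY (FYinv t))⁻¹ * fX (FYinv t) + (fY (FYinv (1 - t)))⁻¹ * fX (FYinv (1 - t)) - 2
        = (fX (FYinv t) - fY (FYinv t)) / fY (FYinv t)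
          + (fX (FYinv (1 - t)) - fY (FYinv (1 - t))) / fY (FYinv (1 - t)) := by
      field_simp
      ring
    rw [key, abs_add_of_mul_nonneg' (by
      rw [div_mul_div_comm]
      exact div_nonneg (hcond t ⟨ht.1.le, ht.2.le⟩) (mul_nonneg hya.le hyb.le))]
    rw [abs_div, abs_div, abs_of_pos hya, abs_of_pos hyb]
    ring
  -- final assembly
  rw [hLHS, hRHS]
  congr 1
  rw [setIntegral_congr_fun measurableSet_Ioo hsplit, integral_add hv1int hv2int,
    hv1eq, hv2eq, ← integral_Ici_eq_integral_Ioi,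
    intervalIntegral.integral_Iio_add_Ici hgint.integrableOn hgint.integrableOn]
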